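/- Let ε > 0 and let a, b, c, d be real numbers each bounded above by √2, satisfying a² + b² + c² + d² = 2 and |a·b − c·d| ≤ ε. Then |(a·c + b·d)²·(a·d + b·c)² − 4·a·b·c·d| ≤ 1000·ε. -/
import Mathlib

set_option maxHeartbeats 1000000 in
lemma key (x y u v ε : ℝ) (hε : 0 < ε) (hu : 0 ≤ u) (hv : 0 ≤ v)
    (huv : u + v = 2) (hx : 4 * x ^ 2 ≤ u ^ 2) (hy : 4 * y ^ 2 ≤ v ^ 2)
    (hxy : |x - y| ≤ ε) :
    |(x * v + y * u) ^ 2 - 4 * (x * y)| ≤ 1000 * ε := by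
  have hv2 : v = 2 - u := by linarith
  subst hv2
  have hu2 : u ≤ 2 := by linarith
  have hxu : |x| ≤ u / 2 := by
    rw [abs_le]; constructor <;> nlinarith
  have hyv : |y| ≤ (2 - u) / 2 := by
    rw [abs_le]; constructor <;> nlinarith
  rw [abs_le] at hxy
  rcases le_or_gt ε (1/500) with hsml | hbig
  · -- small epsilon case
    have hxa : |x| ≤ 1 := le_trans hxu (by linarith)
    have h1u : |1 - u| ≤ 1 := by rw [abs_le]; constructor <;> linarith
    have hea : |x - y| ≤ ε := by rw [abs_le]; exact hxy
    have heq2 : (x * (2 - u) + y * u) ^ 2 - 4 * (x * y)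
        = 4 * (x * ((x - y) * (1 - u))) + (u * (x - y)) ^ 2 := by ring
    rw [heq2]
    have b1 : |4 * (x * ((x - y) * (1 - u)))| ≤ 4 * ε := by
      have e1 : |4 * (x * ((x - y) * (1 - u)))| = 4 * (|x| * (|x - y| * |1 - u|)) := by
        rw [abs_mul, abs_mul, abs_mul]; norm_num
      rw [e1]
      calc 4 * (|x| * (|x - y| * |1 - u|)) ≤ 4 * (1 * (ε * 1)) := by
            gcongr <;> simp [abs_nonneg]
        _ = 4 * ε := by ring
    have b2 : (u * (x - y)) ^ 2 ≤ 4 * ε ^ 2 := by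
      have hesq : (x - y) ^ 2 ≤ ε ^ 2 := by nlinarith
      have hu4 : u ^ 2 ≤ 4 := by nlinarith
      nlinarith [mul_nonneg (by nlinarith : (0:ℝ) ≤ 4 - u ^ 2) (sq_nonneg (x - y))]
    calc |4 * (x * ((x - y) * (1 - u))) + (u * (x - y)) ^ 2|
        ≤ |4 * (x * ((x - y) * (1 - u)))| + |(u * (x - y)) ^ 2| := abs_add_le _ _
      _ = |4 * (x * ((x - y) * (1 - u)))| + (u * (x - y)) ^ 2 := by
          rw [abs_of_nonneg (sq_nonneg (u * (x - y)))]
      _ ≤ 4 * ε + 4 * ε ^ 2 := by linarith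
      _ ≤ 1000 * ε := by nlinarith
  · -- big epsilon case
    have hs : |x * (2 - u) + y * u| ≤ 1 := by
      calc |x * (2 - u) + y * u| ≤ |x * (2 - u)| + |y * u| := abs_add_le _ _
        _ = |x| * (2 - u) + |y| * u := by
            rw [abs_mul, abs_mul, abs_of_nonneg hv, abs_of_nonneg hu]
        _ ≤ (u / 2) * (2 - u) + ((2 - u) / 2) * u := by
            nlinarith [mul_nonneg (sub_nonneg.2 hxu) hv, mul_nonneg (sub_nonneg.2 hyv) hu]
        _ = u * (2 - u) := by ring
        _ ≤ 1 := by nlinarith [sq_nonneg (u - 1)]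
    have h2 : (x * (2 - u) + y * u) ^ 2 ≤ 1 :=
      (sq_le_one_iff_abs_le_one _).mpr hs
    have h3 : x ^ 2 * y ^ 2 ≤ (u ^ 2 / 4) * ((2 - u) ^ 2 / 4) :=
      mul_le_mul (by linarith) (by linarith) (sq_nonneg y) (by positivity)
    have h5 : 16 * (x * y) ^ 2 ≤ 1 := by
      nlinarith [sq_nonneg (u - 1), mul_nonneg hu hv]
    have h4 : |4 * (x * y)| ≤ 1 := by
      apply (sq_le_one_iff_abs_le_one _).mp
      nlinarith
    rw [abs_le] at h4 ⊢
    constructor <;> [linarith [sq_nonneg (x * (2 - u) + y * u), h4.2, hbig];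
      linarith [h2, h4.1, hbig]]

theorem stmt1 (ε : ℝ) (hε : 0 < ε) (a b c d : ℝ)
    (ha : a ≤ Real.sqrt 2) (hb : b ≤ Real.sqrt 2)
    (hc : c ≤ Real.sqrt 2) (hd : d ≤ Real.sqrt 2)
    (hsum : a ^ 2 + b ^ 2 + c ^ 2 + d ^ 2 = 2)
    (hab : |a * b - c * d| ≤ ε) :
    |(a * c + b * d) ^ 2 * (a * d + b * c) ^ 2 - 4 * (a * b * c * d)| ≤ 1000 * ε := by
  have h := key (a*b) (c*d) (a^2+b^2) (c^2+d^2) ε hε (by positivity) (by positivity)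
    (by linarith) (by nlinarith [sq_nonneg (a-b), sq_nonneg (a+b)])
    (by nlinarith [sq_nonneg (c-d), sq_nonneg (c+d)]) hab
  have heq : (a * c + b * d) ^ 2 * (a * d + b * c) ^ 2 - 4 * (a * b * c * d)
      = (a*b * (c^2+d^2) + c*d * (a^2+b^2)) ^ 2 - 4 * (a*b * (c*d)) := by ring
  rw [heq]; exact h
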